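/- For the random-batch estimator F̃ = (n/p)∑_{j∈B} f j of S = ∑_j f j with f : Fin n → ℝ, one has E[F̃² − S²] = ((n−p)/(p(n−1))) (n ∑_j (f j)² − S²) ≤ (n(n−p)/(p(n−1))) ∑_j (f j)², for n ≥ 2 and 1 ≤ p ≤ n. -/

import Mathlib

open Finset

lemma count_supersets {α : Type*} [DecidableEq α] (s t : Finset α) (ht : t ⊆ s) (p : ℕ)
    (hp : t.card ≤ p) :
    ((Finset.powersetCard p s).filter (fun B => t ⊆ B)).card
      = (s.card - t.card).choose (p - t.card) := by
  rw [← Finset.card_sdiff_of_subset ht, ← Finset.card_powersetCard]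
  refine Finset.card_nbij' (fun B => B \ t) (fun C => C ∪ t) ?_ ?_ ?_ ?_
  · intro B hB
    simp only [Finset.mem_coe, Finset.mem_filter, Finset.mem_powersetCard] at hB
    obtain ⟨⟨hBs, hBc⟩, htB⟩ := hB
    refine Finset.mem_powersetCard.2 ⟨Finset.sdiff_subset_sdiff hBs le_rfl, ?_⟩
    rw [Finset.card_sdiff_of_subset htB, hBc]
  · intro C hC
    rw [Finset.mem_coe, Finset.mem_powersetCard] at hC
    obtain ⟨hCs, hCc⟩ := hC
    have hdisj : Disjoint C t := Finset.sdiff_disjoint.mono_left hCs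
    refine Finset.mem_filter.2 ⟨Finset.mem_powersetCard.2 ⟨?_, ?_⟩, Finset.subset_union_right⟩
    · exact Finset.union_subset (hCs.trans (Finset.sdiff_subset)) ht
    · rw [Finset.card_union_of_disjoint hdisj, hCc, Nat.sub_add_cancel hp]
  · intro B hB
    simp only [Finset.mem_coe, Finset.mem_filter] at hB
    exact Finset.sdiff_union_of_subset hB.2
  · intro C hC
    rw [Finset.mem_coe, Finset.mem_powersetCard] at hC
    have hdisj : Disjoint C t := Finset.sdiff_disjoint.mono_left hC.1
    exact Finset.union_sdiff_cancel_right hdisj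

theorem random_batch_excess_second_moment (n p : ℕ) (hn : 2 ≤ n) (hp : 1 ≤ p)
    (hpn : p ≤ n) (f : Fin n → ℝ) (S : ℝ) (hS : S = ∑ j, f j) :
    ((n.choose p : ℝ))⁻¹ *
        ∑ B ∈ Finset.powersetCard p (Finset.univ : Finset (Fin n)),
          ((((n : ℝ) / p) * ∑ j ∈ B, f j) ^ 2 - S ^ 2)
      = (((n : ℝ) - p) / ((p : ℝ) * ((n : ℝ) - 1))) *
          ((n : ℝ) * ∑ j, (f j) ^ 2 - S ^ 2) ∧
    ((n.choose p : ℝ))⁻¹ *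
        ∑ B ∈ Finset.powersetCard p (Finset.univ : Finset (Fin n)),
          ((((n : ℝ) / p) * ∑ j ∈ B, f j) ^ 2 - S ^ 2)
      ≤ ((n : ℝ) * ((n : ℝ) - p) / ((p : ℝ) * ((n : ℝ) - 1))) *
          ∑ j, (f j) ^ 2 := by
  classical
  set Q : ℝ := ∑ j, (f j) ^ 2 with hQ
  -- basic numeric facts
  have hn0 : (0:ℝ) < (n:ℝ) := by positivity
  have hp0 : (0:ℝ) < (p:ℝ) := by exact_mod_cast hp
  have hn1 : (0:ℝ) < (n:ℝ) - 1 := by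
    have : (2:ℝ) ≤ (n:ℝ) := by exact_mod_cast hn
    linarith
  have hc0 : (0:ℝ) < (n.choose p : ℝ) := by
    exact_mod_cast Nat.choose_pos hpn
  -- counting constants
  set a : ℕ := (n-1).choose (p-1) with ha
  set b : ℕ := if 2 ≤ p then (n-2).choose (p-2) else 0 with hb
  -- counts
  have hNii : ∀ i : Fin n,
      ((Finset.powersetCard p (Finset.univ : Finset (Fin n))).filter
        (fun B => i ∈ B)).card = a := by
    intro i
    have := count_supersets (Finset.univ : Finset (Fin n)) {i} (by simp) p hp
    simpa using this
  have hNij : ∀ i j : Fin n, i ≠ j →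
      ((Finset.powersetCard p (Finset.univ : Finset (Fin n))).filter
        (fun B => i ∈ B ∧ j ∈ B)).card = b := by
    intro i j hij
    by_cases h2 : 2 ≤ p
    · have hcard : ({i, j} : Finset (Fin n)).card = 2 := Finset.card_pair hij
      have := count_supersets (Finset.univ : Finset (Fin n)) {i, j} (by simp) p
        (by rw [hcard]; exact h2)
      rw [hb, if_pos h2]
      simp only [Finset.card_univ, Fintype.card_fin, hcard] at this
      rw [← this]
      congr 1
      apply Finset.filter_congr
      intro B _
      simp [Finset.insert_subset_iff]
    · have hp1 : p = 1 := by omega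
      rw [hb, if_neg h2]
      rw [Finset.card_eq_zero, Finset.filter_eq_empty_iff]
      intro B hB
      rw [Finset.mem_powersetCard] at hB
      rintro ⟨hiB, hjB⟩
      have : 2 ≤ B.card := by
        have : ({i, j} : Finset (Fin n)) ⊆ B := by
          simp [Finset.insert_subset_iff, hiB, hjB]
        calc 2 = ({i,j} : Finset (Fin n)).card := (Finset.card_pair hij).symm
        _ ≤ B.card := Finset.card_le_card this
      omega
  -- key cast identities
  have hNa : (n:ℝ) * a = (n.choose p : ℝ) * p := by
    have h1 := Nat.add_one_mul_choose_eq (n-1) (p-1)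
    have e1 : n - 1 + 1 = n := by omega
    have e2 : p - 1 + 1 = p := by omega
    simp only [Nat.succ_eq_add_one, e1, e2] at h1
    exact_mod_cast h1
  have hNb : (n:ℝ) * ((n:ℝ) - 1) * b = (n.choose p : ℝ) * p * ((p:ℝ) - 1) := by
    by_cases h2 : 2 ≤ p
    · rw [hb, if_pos h2]
      have h1 : (n-1) * (n-2).choose (p-2) = (n-1).choose (p-1) * (p-1) := by
        have := Nat.add_one_mul_choose_eq (n-2) (p-2)
        have e1 : (n-2)+1 = n-1 := by omega
        have e2 : (p-2)+1 = p-1 := by omega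
        rw [e1, e2] at this
        linarith [this]
      have h1' : ((n:ℝ)-1) * ((n-2).choose (p-2) : ℝ) = (a:ℝ) * ((p:ℝ)-1) := by
        have hcast : ((n-1 : ℕ) : ℝ) = (n:ℝ) - 1 := by
          have : (1:ℕ) ≤ n := by omega
          push_cast [this]; ring
        have hcast2 : ((p-1 : ℕ) : ℝ) = (p:ℝ) - 1 := by
          push_cast [hp]; ring
        have := congrArg (fun x : ℕ => (x : ℝ)) h1
        push_cast at this
        rw [hcast, hcast2] at this
        exact this
      calc (n:ℝ) * ((n:ℝ) - 1) * ((n-2).choose (p-2) : ℝ)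
          = (n:ℝ) * (((n:ℝ)-1) * ((n-2).choose (p-2) : ℝ)) := by ring
        _ = (n:ℝ) * ((a:ℝ) * ((p:ℝ)-1)) := by rw [h1']
        _ = ((n:ℝ) * a) * ((p:ℝ)-1) := by ring
        _ = (n.choose p : ℝ) * p * ((p:ℝ)-1) := by rw [hNa]
    · have hp1 : p = 1 := by omega
      rw [hb, if_neg h2]
      subst hp1
      simp
  -- the sum of squares over batches
  have hT : ∑ B ∈ Finset.powersetCard p (Finset.univ : Finset (Fin n)),
      (∑ j ∈ B, f j) ^ 2 = ((a:ℝ) - b) * Q + (b:ℝ) * S ^ 2 := by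
    have step1 : ∀ B ∈ Finset.powersetCard p (Finset.univ : Finset (Fin n)),
        (∑ j ∈ B, f j) ^ 2
          = ∑ i, ∑ j, (if i ∈ B ∧ j ∈ B then f i * f j else 0) := by
      intro B _
      have hmem : ∀ (g : Fin n → ℝ), ∑ j ∈ B, g j = ∑ j, if j ∈ B then g j else 0 := by
        intro g
        rw [Finset.sum_ite_mem, Finset.univ_inter]
      rw [hmem f, sq, Finset.sum_mul_sum]
      congr 1; ext i; congr 1; ext j
      by_cases hi : i ∈ B <;> by_cases hj : j ∈ B <;> simp [hi, hj]
    rw [Finset.sum_congr rfl step1, Finset.sum_comm]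
    have inner : ∀ i : Fin n,
        ∑ B ∈ Finset.powersetCard p (Finset.univ : Finset (Fin n)),
          ∑ j, (if i ∈ B ∧ j ∈ B then f i * f j else 0)
        = ∑ j, (if i = j then (a:ℝ) else (b:ℝ)) * (f i * f j) := by
      intro i
      rw [Finset.sum_comm]
      refine Finset.sum_congr rfl fun j _ => ?_
      rw [← Finset.sum_filter]
      rw [Finset.sum_const, nsmul_eq_mul]
      by_cases hij : i = j
      · subst hij
        rw [if_pos rfl]
        congr 2
        rw [← hNii i]
        congr 1
        apply Finset.filter_congr; intro B _; simp
      · rw [if_neg hij, hNij i j hij]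
    rw [Finset.sum_congr rfl fun i _ => inner i]
    have expand : ∀ i : Fin n, ∑ j, (if i = j then (a:ℝ) else (b:ℝ)) * (f i * f j)
        = ((a:ℝ) - b) * (f i)^2 + (b:ℝ) * (f i * S) := by
      intro i
      have : ∀ j : Fin n, (if i = j then (a:ℝ) else (b:ℝ)) * (f i * f j)
          = (b:ℝ) * (f i * f j) + (if i = j then ((a:ℝ) - b) * (f i)^2 else 0) := by
        intro j
        by_cases hij : i = j
        · subst hij; simp [sq]; ring
        · simp [hij]
      rw [Finset.sum_congr rfl fun j _ => this j, Finset.sum_add_distrib,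
        Finset.sum_ite_eq Finset.univ i (fun _ => ((a:ℝ) - b) * (f i)^2)]
      simp [← Finset.mul_sum, ← hS]
      ring
    rw [Finset.sum_congr rfl fun i _ => expand i, Finset.sum_add_distrib]
    rw [← Finset.mul_sum, ← Finset.mul_sum, ← hQ]
    have : ∑ i, f i * S = S ^ 2 := by
      rw [← Finset.sum_mul, ← hS, sq]
    rw [this]
  -- rewrite the LHS sum
  have hsum : ∑ B ∈ Finset.powersetCard p (Finset.univ : Finset (Fin n)),
      ((((n : ℝ) / p) * ∑ j ∈ B, f j) ^ 2 - S ^ 2)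
      = ((n:ℝ)/p)^2 * (((a:ℝ) - b) * Q + (b:ℝ) * S ^ 2) - (n.choose p : ℝ) * S ^ 2 := by
    rw [Finset.sum_sub_distrib, Finset.sum_const, nsmul_eq_mul,
      Finset.card_powersetCard, Finset.card_univ, Fintype.card_fin]
    rw [← hT, Finset.mul_sum]
    congr 1
    exact Finset.sum_congr rfl fun B _ => mul_pow _ _ _
  have key : ((n.choose p : ℝ))⁻¹ *
        ∑ B ∈ Finset.powersetCard p (Finset.univ : Finset (Fin n)),
          ((((n : ℝ) / p) * ∑ j ∈ B, f j) ^ 2 - S ^ 2)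
      = (((n : ℝ) - p) / ((p : ℝ) * ((n : ℝ) - 1))) * ((n : ℝ) * Q - S ^ 2) := by
    rw [hsum]
    have hbval : (b:ℝ) = (n.choose p : ℝ) * p * ((p:ℝ) - 1) / ((n:ℝ) * ((n:ℝ) - 1)) := by
      field_simp at hNb ⊢
      linarith [hNb]
    have haval : (a:ℝ) = (n.choose p : ℝ) * p / (n:ℝ) := by
      field_simp
      linarith [hNa]
    rw [hbval, haval]
    field_simp
    ring
  refine ⟨key, ?_⟩
  rw [key]
  have hcoef : (0:ℝ) ≤ ((n : ℝ) - p) / ((p : ℝ) * ((n : ℝ) - 1)) := by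
    apply div_nonneg
    · have : (p:ℝ) ≤ (n:ℝ) := by exact_mod_cast hpn
      linarith
    · positivity
  have : (((n : ℝ) - p) / ((p : ℝ) * ((n : ℝ) - 1))) * ((n : ℝ) * Q - S ^ 2)
      ≤ (((n : ℝ) - p) / ((p : ℝ) * ((n : ℝ) - 1))) * ((n : ℝ) * Q) := by
    apply mul_le_mul_of_nonneg_left _ hcoef
    nlinarith [sq_nonneg S]
  calc (((n : ℝ) - p) / ((p : ℝ) * ((n : ℝ) - 1))) * ((n : ℝ) * Q - S ^ 2)
      ≤ (((n : ℝ) - p) / ((p : ℝ) * ((n : ℝ) - 1))) * ((n : ℝ) * Q) := this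
    _ = ((n : ℝ) * ((n : ℝ) - p) / ((p : ℝ) * ((n : ℝ) - 1))) * Q := by ring
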